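/- arXiv:2006.04048 — 3 statements merged into one kernel-verified Lean document; each statement's English description precedes it below -/
import Mathlib

section
/- Let α, β > 0 and k ∈ ℕ. For every t ∈ [0, 2kα], the triangle waveform satisfies T_k(2kα − t; α, β) = T_k(t; α, β). -/
open Real
open scoped BigOperators

/-- The triangle function `T(t; α, β)`: equals `βt` on `[0, α]`, `2αβ - βt` on `(α, 2α]`,
and `0` otherwise. -/
noncomputable def tri (α β t : ℝ) : ℝ :=
  if 0 ≤ t ∧ t ≤ α then β * t
  else if α < t ∧ t ≤ 2 * α then 2 * α * β - β * t
  else 0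

/-- The triangle waveform `T_k(t; α, β) = Σ_{i=-k+1}^{k} T(t - 2α(i-1); α, β)`. -/
noncomputable def triWave (k : ℕ) (α β t : ℝ) : ℝ :=
  ∑ i ∈ Finset.Icc (-(k : ℤ) + 1) (k : ℤ), tri α β (t - 2 * α * ((i : ℝ) - 1))

lemma tri_zero_of_nonpos (α β t : ℝ) (hα : 0 < α) (ht : t ≤ 0) : tri α β t = 0 := by
  unfold tri
  split_ifs with h1 h2
  · have : t = 0 := le_antisymm ht h1.1
    simp [this]
  · linarith [h2.1]
  · rfl

lemma tri_zero_of_ge (α β t : ℝ) (hα : 0 < α) (ht : 2 * α ≤ t) : tri α β t = 0 := by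
  unfold tri
  split_ifs with h1 h2
  · linarith [h1.2]
  · have : t = 2 * α := le_antisymm h2.2 ht
    rw [this]; ring
  · rfl

lemma tri_refl (α β t : ℝ) (hα : 0 < α) : tri α β (2 * α - t) = tri α β t := by
  unfold tri
  split_ifs with h1 h2 h3 h4 h5 h6 h7 h8 <;> try push_neg at *
  · have : t = α := le_antisymm h2.2 (by linarith [h1.2])
    rw [this]; ring
  · ring
  · exfalso; linarith [h3 (h2 (by linarith [h1.2])), h1.1]
  · ring
  · exfalso; linarith [h4.1, h6.1]
  · exfalso; linarith [h5 (by linarith [h4.2]), h4.1]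
  · exfalso; linarith [h4 (h1 (by linarith [h7.2])), h7.1]
  · exfalso; linarith [h1 (by linarith [h8.2]), h8.1]
  · rfl

/-- **Symmetry of the triangle waveform (reflection part).** For `t ∈ [0, 2kα]`,
`T_k(2kα - t; α, β) = T_k(t; α, β)`. -/
theorem triWave_reflection (α β : ℝ) (hα : 0 < α) (hβ : 0 < β) (k : ℕ) (t : ℝ)
    (ht : t ∈ Set.Icc 0 (2 * (k : ℝ) * α)) :
    triWave k α β (2 * (k : ℝ) * α - t) = triWave k α β t := by
  obtain ⟨ht0, ht1⟩ := ht
  unfold triWave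
  -- reindex the LHS via i ↦ k + 1 - i, landing in Icc 1 (2k)
  have key : ∀ i : ℤ,
      tri α β (2 * (k : ℝ) * α - t - 2 * α * ((i : ℝ) - 1))
        = tri α β (t - 2 * α * (((k : ℤ) + 1 - i : ℤ) - 1 : ℝ)) := by
    intro i
    have := tri_refl α β (t - 2 * α * (((k : ℤ) + 1 - i : ℤ) - 1 : ℝ)) hα
    rw [← this]
    congr 1
    push_cast
    ring
  calc ∑ i ∈ Finset.Icc (-(k : ℤ) + 1) (k : ℤ),
        tri α β (2 * (k : ℝ) * α - t - 2 * α * ((i : ℝ) - 1))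
      = ∑ i ∈ Finset.Icc (-(k : ℤ) + 1) (k : ℤ),
        tri α β (t - 2 * α * (((k : ℤ) + 1 - i : ℤ) - 1 : ℝ)) := by
        exact Finset.sum_congr rfl fun i _ => key i
    _ = ∑ j ∈ Finset.Icc (1 : ℤ) (2 * (k : ℤ)),
        tri α β (t - 2 * α * ((j : ℝ) - 1)) := by
        apply Finset.sum_nbij' (fun i => (k : ℤ) + 1 - i) (fun j => (k : ℤ) + 1 - j)
        · intro a ha
          simp only [Finset.mem_Icc] at *
          omega
        · intro a ha
          simp only [Finset.mem_Icc] at *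
          omega
        · intro a _; ring
        · intro a _; ring
        · intro a _
          norm_num
    _ = ∑ j ∈ Finset.Icc (-(k : ℤ) + 1) (2 * (k : ℤ)),
        tri α β (t - 2 * α * ((j : ℝ) - 1)) := by
        apply Finset.sum_subset
        · intro x; simp only [Finset.mem_Icc]; omega
        · intro j hj hj'
          simp only [Finset.mem_Icc] at hj hj'
          have hj0 : j ≤ 0 := by omega
          apply tri_zero_of_ge α β _ hα
          have : (j : ℝ) ≤ 0 := by exact_mod_cast hj0
          nlinarith
    _ = ∑ j ∈ Finset.Icc (-(k : ℤ) + 1) (k : ℤ),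
        tri α β (t - 2 * α * ((j : ℝ) - 1)) := by
        symm
        apply Finset.sum_subset
        · intro x; simp only [Finset.mem_Icc]; omega
        · intro j hj hj'
          simp only [Finset.mem_Icc] at hj hj'
          have hjk : (k : ℤ) + 1 ≤ j := by omega
          apply tri_zero_of_nonpos α β _ hα
          have : ((k : ℝ)) + 1 ≤ (j : ℝ) := by exact_mod_cast hjk
          nlinarith
end

section
/- Let ω > 0. For every t ∈ [0, π/ω], one has sin(ωt) = (π/2) ∫_0^1 ω sin(πS) [ (π/ω)(1 − S) − ReLU((π/ω)(1 − S) − t) − ReLU(t − πS/ω) ] dS. -/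
open Real

private lemma key_antideriv (A B x y : ℝ) :
    ∫ S in x..y, (A + B * S) * Real.sin (π * S)
      = (-(A + B * y) * Real.cos (π * y) / π + B * Real.sin (π * y) / π ^ 2)
        - (-(A + B * x) * Real.cos (π * x) / π + B * Real.sin (π * x) / π ^ 2) := by
  have hπ : (π : ℝ) ≠ 0 := Real.pi_ne_zero
  have hd : ∀ S : ℝ, HasDerivAt
      (fun S => -(A + B * S) * Real.cos (π * S) / π + B * Real.sin (π * S) / π ^ 2)
      ((A + B * S) * Real.sin (π * S)) S := by
    intro S
    have hps : HasDerivAt (fun S : ℝ => π * S) π S := by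
      simpa using (hasDerivAt_id S).const_mul π
    have hc : HasDerivAt (fun S => Real.cos (π * S)) (-Real.sin (π * S) * π) S :=
      (Real.hasDerivAt_cos (π * S)).comp S hps
    have hs : HasDerivAt (fun S => Real.sin (π * S)) (Real.cos (π * S) * π) S :=
      (Real.hasDerivAt_sin (π * S)).comp S hps
    have hl : HasDerivAt (fun S : ℝ => -(A + B * S)) (-B) S := by
      have h0 := (((hasDerivAt_id S).const_mul B).const_add A).neg
      exact h0.congr_deriv (by ring)
    have h := ((hl.mul hc).div_const π).add ((hs.const_mul B).div_const (π ^ 2))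
    exact h.congr_deriv (by field_simp; ring)
  rw [intervalIntegral.integral_eq_sub_of_hasDerivAt (fun S _ => hd S)
    ((Continuous.intervalIntegrable (by continuity) x y))]

/-- **ReLU integral representation of the sine.** For `ω > 0` and `t ∈ [0, π/ω]`,
`sin(ωt) = (π/2) ∫_0^1 ω sin(πS) [(π/ω)(1-S) - ReLU((π/ω)(1-S) - t) - ReLU(t - πS/ω)] dS`. -/
theorem sin_relu_representation (ω : ℝ) (hω : 0 < ω) (t : ℝ)
    (ht : t ∈ Set.Icc (0 : ℝ) (π / ω)) :
    Real.sin (ω * t) =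
      π / 2 * ∫ S in (0 : ℝ)..1,
        ω * Real.sin (π * S) *
          (π / ω * (1 - S) - max 0 (π / ω * (1 - S) - t) - max 0 (t - π * S / ω)) := by
  have hπ : (0 : ℝ) < π := Real.pi_pos
  have hπ' : (π : ℝ) ≠ 0 := ne_of_gt hπ
  have hω' : ω ≠ 0 := ne_of_gt hω
  obtain ⟨ht0, ht1⟩ := ht
  set a : ℝ := ω * t / π with ha_def
  have ha0 : 0 ≤ a := div_nonneg (mul_nonneg hω.le ht0) hπ.le
  have ha1 : a ≤ 1 := by
    rw [ha_def, div_le_one hπ]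
    calc ω * t ≤ ω * (π / ω) := by nlinarith
    _ = π := by field_simp
  have hta : t = π / ω * a := by rw [ha_def]; field_simp
  -- continuity / integrability facts
  have hsin : Continuous fun S : ℝ => Real.sin (π * S) :=
    Real.continuous_sin.comp (continuous_const.mul continuous_id)
  have c1 : Continuous fun S : ℝ => ω * Real.sin (π * S) * (π / ω * (1 - S)) :=
    (continuous_const.mul hsin).mul
      (continuous_const.mul (continuous_const.sub continuous_id))
  have c2 : Continuous fun S : ℝ => ω * Real.sin (π * S) * max 0 (π / ω * (1 - S) - t) :=
    (continuous_const.mul hsin).mul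
      (continuous_const.max
        ((continuous_const.mul (continuous_const.sub continuous_id)).sub continuous_const))
  have c3 : Continuous fun S : ℝ => ω * Real.sin (π * S) * max 0 (t - π * S / ω) :=
    (continuous_const.mul hsin).mul
      (continuous_const.max
        (continuous_const.sub ((continuous_const.mul continuous_id).div_const ω)))
  -- split the integral into three parts
  have e1 : (∫ S in (0 : ℝ)..1,
        ω * Real.sin (π * S) *
          (π / ω * (1 - S) - max 0 (π / ω * (1 - S) - t) - max 0 (t - π * S / ω)))
      = (∫ S in (0 : ℝ)..1, ω * Real.sin (π * S) * (π / ω * (1 - S)))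
        - (∫ S in (0 : ℝ)..1, ω * Real.sin (π * S) * max 0 (π / ω * (1 - S) - t))
        - (∫ S in (0 : ℝ)..1, ω * Real.sin (π * S) * max 0 (t - π * S / ω)) := by
    rw [← intervalIntegral.integral_sub (c1.intervalIntegrable 0 1) (c2.intervalIntegrable 0 1),
      ← intervalIntegral.integral_sub (f := fun S => ω * Real.sin (π * S) * (π / ω * (1 - S)) - ω * Real.sin (π * S) * max 0 (π / ω * (1 - S) - t))
        ((c1.sub c2).intervalIntegrable 0 1) (c3.intervalIntegrable 0 1)]
    congr 1
    ext S
    ring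
  -- second integral: supported on [0, 1-a]
  have e2 : (∫ S in (0 : ℝ)..1, ω * Real.sin (π * S) * max 0 (π / ω * (1 - S) - t))
      = ∫ S in (0 : ℝ)..(1 - a), ω * Real.sin (π * S) * (π / ω * (1 - S) - t) := by
    rw [← intervalIntegral.integral_add_adjacent_intervals
      (c2.intervalIntegrable 0 (1 - a)) (c2.intervalIntegrable (1 - a) 1)]
    have hz : (∫ S in (1 - a : ℝ)..1, ω * Real.sin (π * S) * max 0 (π / ω * (1 - S) - t)) = 0 := by
      rw [intervalIntegral.integral_congr (g := fun _ => 0)]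
      · simp
      · intro S hS
        rw [Set.uIcc_of_le (by linarith)] at hS
        have : π / ω * (1 - S) - t ≤ 0 := by
          have h1 : 1 - S ≤ a := by linarith [hS.1]
          have h2 : π / ω * (1 - S) ≤ π / ω * a := by
            apply mul_le_mul_of_nonneg_left h1 (le_of_lt (div_pos hπ hω))
          linarith [hta ▸ h2]
        simp [max_eq_left this]
    rw [hz, add_zero]
    apply intervalIntegral.integral_congr
    intro S hS
    rw [Set.uIcc_of_le (by linarith)] at hS
    have : 0 ≤ π / ω * (1 - S) - t := by
      have h1 : a ≤ 1 - S := by linarith [hS.2]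
      have h2 : π / ω * a ≤ π / ω * (1 - S) :=
        mul_le_mul_of_nonneg_left h1 (le_of_lt (div_pos hπ hω))
      linarith [hta ▸ h2]
    simp [max_eq_right this]
  -- third integral: supported on [0, a]
  have e3 : (∫ S in (0 : ℝ)..1, ω * Real.sin (π * S) * max 0 (t - π * S / ω))
      = ∫ S in (0 : ℝ)..a, ω * Real.sin (π * S) * (t - π * S / ω) := by
    rw [← intervalIntegral.integral_add_adjacent_intervals
      (c3.intervalIntegrable 0 a) (c3.intervalIntegrable a 1)]
    have hz : (∫ S in (a : ℝ)..1, ω * Real.sin (π * S) * max 0 (t - π * S / ω)) = 0 := by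
      rw [intervalIntegral.integral_congr (g := fun _ => 0)]
      · simp
      · intro S hS
        rw [Set.uIcc_of_le ha1] at hS
        have : t - π * S / ω ≤ 0 := by
          have h2 : π / ω * a ≤ π / ω * S :=
            mul_le_mul_of_nonneg_left hS.1 (le_of_lt (div_pos hπ hω))
          have : π * S / ω = π / ω * S := by ring
          rw [this]
          linarith [hta ▸ h2]
        simp [max_eq_left this]
    rw [hz, add_zero]
    apply intervalIntegral.integral_congr
    intro S hS
    rw [Set.uIcc_of_le ha0] at hS
    have : 0 ≤ t - π * S / ω := by
      have h2 : π / ω * S ≤ π / ω * a :=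
        mul_le_mul_of_nonneg_left hS.2 (le_of_lt (div_pos hπ hω))
      have h3 : π * S / ω = π / ω * S := by ring
      rw [h3]
      linarith [hta ▸ h2]
    simp [max_eq_right this]
  -- evaluate the three integrals
  have v1 : (∫ S in (0 : ℝ)..1, ω * Real.sin (π * S) * (π / ω * (1 - S)))
      = ω * ∫ S in (0 : ℝ)..1, (π / ω + (-(π / ω)) * S) * Real.sin (π * S) := by
    rw [← intervalIntegral.integral_const_mul]
    congr 1; ext S; ring
  have v2 : (∫ S in (0 : ℝ)..(1 - a), ω * Real.sin (π * S) * (π / ω * (1 - S) - t))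
      = ω * ∫ S in (0 : ℝ)..(1 - a), ((π / ω - t) + (-(π / ω)) * S) * Real.sin (π * S) := by
    rw [← intervalIntegral.integral_const_mul]
    congr 1; ext S; ring
  have v3 : (∫ S in (0 : ℝ)..a, ω * Real.sin (π * S) * (t - π * S / ω))
      = ω * ∫ S in (0 : ℝ)..a, (t + (-(π / ω)) * S) * Real.sin (π * S) := by
    rw [← intervalIntegral.integral_const_mul]
    congr 1; ext S; ring
  rw [e1, e2, e3, v1, v2, v3, key_antideriv, key_antideriv, key_antideriv]
  have hpa : π * a = ω * t := by rw [ha_def]; field_simp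
  have h1a : π * (1 - a) = π - ω * t := by rw [mul_sub, hpa]; ring
  rw [hpa, h1a, Real.sin_pi_sub, Real.cos_pi_sub]
  simp only [mul_one, mul_zero, Real.sin_pi, Real.cos_pi, Real.sin_zero, Real.cos_zero]
  rw [hta, ha_def]
  field_simp
  ring
end

section
/- Let l ∈ ℕ with l ≥ 1, let γ > 0 and α₁ > 0, and for i ≥ 1 set α_i = α₁ (γ/(2l))^{i−1} and define f_i : ℝ → ℝ by f_i(t) = T_l(t; α_i, γ). Then for every m ≥ 1 and every t ∈ ℝ, the composition satisfies f_m ∘ f_{m−1} ∘ ⋯ ∘ f_1(t) = T_{2^{m−1} l^m}(t; α_m / γ^{m−1}, γ^m). -/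
open Real
open scoped BigOperators

/-- `iterComp g m = g m ∘ g (m-1) ∘ ⋯ ∘ g 1`. -/
noncomputable def iterComp (g : ℕ → ℝ → ℝ) : ℕ → ℝ → ℝ
  | 0 => id
  | m + 1 => g (m + 1) ∘ iterComp g m

noncomputable def hfn (x : ℝ) : ℝ := |2 * Int.fract ((x + 1) / 2) - 1|

lemma hfn_nonneg (x : ℝ) : 0 ≤ hfn x := abs_nonneg _

lemma hfn_le_one (x : ℝ) : hfn x ≤ 1 := by
  have h1 := Int.fract_nonneg ((x + 1) / 2)
  have h2 := Int.fract_lt_one ((x + 1) / 2)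
  rw [hfn, abs_le]; constructor <;> linarith

lemma hfn_add_two_int (x : ℝ) (j : ℤ) : hfn (x + 2 * j) = hfn x := by
  rw [hfn, show (x + 2 * (j:ℝ) + 1) / 2 = (x + 1) / 2 + j by ring, Int.fract_add_intCast, hfn]

lemma hfn_eval (y : ℝ) (h1 : -1 ≤ y) (h2 : y ≤ 1) : hfn y = |y| := by
  rcases eq_or_lt_of_le h2 with rfl | h2
  · norm_num [hfn]
  · rw [hfn, Int.fract_eq_self.mpr ⟨by linarith, by linarith⟩]
    congr 1; ring

lemma hfn_zero : hfn 0 = 0 := by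
  rw [hfn_eval 0 (by norm_num) (by norm_num), abs_zero]

/-- decomposition: x = y + 2n with y ∈ [-1,1) and hfn x = |y|. -/
lemma hfn_decomp (x : ℝ) : ∃ n : ℤ, -1 ≤ x - 2*n ∧ x - 2*n < 1 ∧ hfn x = |x - 2*n| := by
  refine ⟨⌊(x+1)/2⌋, ?_, ?_, ?_⟩
  · have := Int.floor_le ((x+1)/2); linarith
  · have := Int.lt_floor_add_one ((x+1)/2); linarith
  · have h1 : -1 ≤ x - 2*(⌊(x+1)/2⌋:ℝ) := by
      have := Int.floor_le ((x+1)/2); linarith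
    have h2 : x - 2*(⌊(x+1)/2⌋:ℝ) < 1 := by
      have := Int.lt_floor_add_one ((x+1)/2); linarith
    calc hfn x = hfn (x - 2*(⌊(x+1)/2⌋:ℝ) + 2*(⌊(x+1)/2⌋:ℝ)) := by ring_nf
      _ = |x - 2*(⌊(x+1)/2⌋:ℝ)| := by
          rw [hfn_add_two_int, hfn_eval _ h1 h2.le]

lemma hfn_comp (c : ℤ) (x : ℝ) : hfn (c * hfn x) = hfn (c * x) := by
  obtain ⟨n, h1, h2, h3⟩ := hfn_decomp x
  have hneg : ∀ z : ℝ, hfn (-z) = hfn z := by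
    intro z
    obtain ⟨m, g1, g2, g3⟩ := hfn_decomp z
    have : -z = -(z - 2*m) + 2*(-m : ℤ) := by push_cast; ring
    rw [this, hfn_add_two_int, hfn_eval _ (by linarith) (by linarith), abs_neg, ← g3]
  rcases abs_cases (x - 2*(n:ℝ)) with ⟨h4, _⟩ | ⟨h4, _⟩
  · have : (c:ℝ) * hfn x = c * x + 2 * ((-c*n : ℤ):ℝ) := by
      rw [h3, h4]; push_cast; ring
    rw [this, hfn_add_two_int]
  · have : (c:ℝ) * hfn x = -(c * x) + 2 * ((c*n : ℤ):ℝ) := by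
      rw [h3, h4]; push_cast; ring
    rw [this, hfn_add_two_int, hneg]

lemma tri_left {α β s : ℝ} (h0 : 0 ≤ s) (h1 : s ≤ α) : tri α β s = β * s :=
  if_pos ⟨h0, h1⟩

lemma tri_right {α β s : ℝ} (h0 : α < s) (h1 : s ≤ 2*α) : tri α β s = 2*α*β - β*s := by
  rw [tri, if_neg (by push_neg; intro _; linarith), if_pos ⟨h0, h1⟩]

lemma tri_nonpos {α β s : ℝ} (hα : 0 < α) (h : s ≤ 0) : tri α β s = 0 := by
  rw [tri]
  split_ifs with h1 h2
  · have : s = 0 := le_antisymm h h1.1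
    rw [this, mul_zero]
  · exact absurd h (by push_neg; linarith [h2.1])
  · rfl

lemma tri_ge {α β s : ℝ} (hα : 0 < α) (h : 2*α ≤ s) : tri α β s = 0 := by
  rw [tri]
  split_ifs with h1 h2
  · exact absurd h (by push_neg; linarith [h1.2])
  · have : s = 2*α := le_antisymm h2.2 h
    rw [this]; ring
  · rfl

lemma triWave_eval (k : ℕ) (hk : 1 ≤ k) (α β t : ℝ) (hα : 0 < α)
    (hlo : -(2*α*k) ≤ t) (hhi : t ≤ 2*α*k) :
    triWave k α β t = β * α * hfn (t / α) := by
  set x := t / α with hxdef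
  have hxt : x * α = t := div_mul_cancel₀ t hα.ne'
  have hx1 : -(2*(k:ℝ)) ≤ x := by nlinarith
  have hx2 : x ≤ 2*(k:ℝ) := by nlinarith
  obtain ⟨n, hy1, hy2, hy3⟩ := hfn_decomp x
  have harg : ∀ i : ℤ, t - 2*α*((i:ℝ)-1) = α * (x - 2*((i:ℝ)-1)) := by
    intro i; rw [← hxt]; ring
  rw [triWave, hy3]
  rcases le_or_gt 0 (x - 2*(n:ℝ)) with hy0 | hy0
  · -- upslope: active index n+1
    rw [abs_of_nonneg hy0]
    have key : ∀ i ∈ Finset.Icc (-(k:ℤ)+1) (k:ℤ), i ≠ n+1 →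
        tri α β (t - 2*α*((i:ℝ)-1)) = 0 := by
      intro i _ hne
      rcases lt_or_gt_of_ne hne with hlt | hgt
      · have hiR : (i:ℝ) ≤ (n:ℝ) := by exact_mod_cast Int.lt_add_one_iff.mp hlt
        refine tri_ge hα ?_
        rw [harg i]
        nlinarith [mul_nonneg hα.le (show (0:ℝ) ≤ x - 2*((i:ℝ)-1) - 2 by linarith)]
      · have hiZ : (n:ℤ) + 2 ≤ i := by omega
        have hiR : (n:ℝ) + 2 ≤ (i:ℝ) := by exact_mod_cast hiZ
        refine tri_nonpos hα ?_
        rw [harg i]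
        nlinarith [mul_nonpos_of_nonneg_of_nonpos hα.le
          (show x - 2*((i:ℝ)-1) ≤ 0 by linarith)]
    have hval : tri α β (t - 2*α*(((n+1:ℤ):ℝ)-1)) = β * α * (x - 2*(n:ℝ)) := by
      have h1 : t - 2*α*(((n+1:ℤ):ℝ)-1) = α * (x - 2*(n:ℝ)) := by
        rw [← hxt]; push_cast; ring
      rw [h1, tri_left (mul_nonneg hα.le hy0)
        (by nlinarith [mul_le_mul_of_nonneg_left hy2.le hα.le])]
      ring
    have hout : (n+1 : ℤ) ∉ Finset.Icc (-(k:ℤ)+1) (k:ℤ) →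
        tri α β (t - 2*α*(((n+1:ℤ):ℝ)-1)) = 0 := by
      intro hnot
      rw [Finset.mem_Icc] at hnot; push_neg at hnot
      have hlowR : (-2*(k:ℝ) - 1) < 2*(n:ℝ) := by linarith
      have hlowZ : (-2*(k:ℤ) - 1) < 2*n := by exact_mod_cast hlowR
      have hup := hnot (by omega)
      have hnleR : 2*(n:ℝ) ≤ 2*(k:ℝ) := by linarith
      have hnleZ : 2*(n:ℤ) ≤ 2*(k:ℤ) := by exact_mod_cast hnleR
      have hnk : n = (k:ℤ) := by omega
      refine tri_nonpos hα ?_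
      have h1 : t - 2*α*(((n+1:ℤ):ℝ)-1) = α * (x - 2*(n:ℝ)) := by
        rw [← hxt]; push_cast; ring
      have hxk : x - 2*(n:ℝ) ≤ 0 := by
        rw [hnk]; push_cast; linarith
      rw [h1]
      exact mul_nonpos_of_nonneg_of_nonpos hα.le hxk
    rw [Finset.sum_eq_single _ key hout, hval]
  · -- downslope: active index n
    rw [abs_of_neg hy0]
    have key : ∀ i ∈ Finset.Icc (-(k:ℤ)+1) (k:ℤ), i ≠ n →
        tri α β (t - 2*α*((i:ℝ)-1)) = 0 := by
      intro i _ hne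
      rcases lt_or_gt_of_ne hne with hlt | hgt
      · have hiR : (i:ℝ) ≤ (n:ℝ) - 1 := by
          have : (i:ℤ) ≤ n - 1 := by omega
          exact_mod_cast this
        refine tri_ge hα ?_
        rw [harg i]
        nlinarith [mul_nonneg hα.le (show (0:ℝ) ≤ x - 2*((i:ℝ)-1) - 2 by linarith)]
      · have hiR : (n:ℝ) + 1 ≤ (i:ℝ) := by exact_mod_cast hgt
        refine tri_nonpos hα ?_
        rw [harg i]
        nlinarith [mul_nonpos_of_nonneg_of_nonpos hα.le
          (show x - 2*((i:ℝ)-1) ≤ 0 by linarith)]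
    have hval : tri α β (t - 2*α*((n:ℝ)-1)) = β * α * (-(x - 2*(n:ℝ))) := by
      have h1 : t - 2*α*((n:ℝ)-1) = α * (x - 2*(n:ℝ) + 2) := by
        rw [← hxt]; ring
      rcases eq_or_lt_of_le hy1 with heq | hlt1
      · have hy : x - 2*(n:ℝ) = -1 := heq.symm
        have h2 : α * (x - 2*(n:ℝ) + 2) = α := by rw [hy]; ring
        rw [h1, h2, tri_left hα.le le_rfl, hy]; ring
      · have hb1 : α < α * (x - 2*(n:ℝ) + 2) := by nlinarith
        have hb2 : α * (x - 2*(n:ℝ) + 2) ≤ 2*α := by nlinarith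
        rw [h1, tri_right hb1 hb2]; ring
    have hmem : (n : ℤ) ∈ Finset.Icc (-(k:ℤ)+1) (k:ℤ) := by
      rw [Finset.mem_Icc]
      constructor
      · have hR : -2*(k:ℝ) < 2*(n:ℝ) := by linarith
        have hZ : -2*(k:ℤ) < 2*n := by exact_mod_cast hR
        omega
      · have hR : 2*(n:ℝ) ≤ 2*(k:ℝ) + 1 := by linarith
        have hZ : 2*(n:ℤ) ≤ 2*(k:ℤ) + 1 := by exact_mod_cast hR
        omega
    rw [Finset.sum_eq_single _ key (fun h => absurd hmem h), hval]

lemma triWave_zero (k : ℕ) (α β t : ℝ) (hα : 0 < α) (h : 2*α*k < |t|) :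
    triWave k α β t = 0 := by
  apply Finset.sum_eq_zero
  intro i hi
  rw [Finset.mem_Icc] at hi
  have h1R : -(k:ℝ) + 1 ≤ (i:ℝ) := by exact_mod_cast hi.1
  have h2R : (i:ℝ) ≤ (k:ℝ) := by exact_mod_cast hi.2
  rcases abs_cases t with ⟨heq, _⟩ | ⟨heq, _⟩
  · rw [heq] at h
    refine tri_ge hα ?_
    nlinarith [mul_nonneg hα.le (show (0:ℝ) ≤ (k:ℝ) - (i:ℝ) by linarith)]
  · rw [heq] at h
    refine tri_nonpos hα ?_
    nlinarith [mul_nonneg hα.le (show (0:ℝ) ≤ (k:ℝ) + (i:ℝ) - 1 by linarith)]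

lemma triWave_comp (K L : ℕ) (hK : 1 ≤ K) (hL : 1 ≤ L) (A B γ : ℝ)
    (hA : 0 < A) (hB : 0 < B) (hγ : 0 < γ) (t : ℝ) :
    triWave L (A*B/(2*L)) γ (triWave K A B t) = triWave (2*K*L) (A/(2*L)) (γ*B) t := by
  have hL0 : (0:ℝ) < L := by exact_mod_cast hL
  have hα' : 0 < A*B/(2*L) := by positivity
  have hA' : 0 < A/(2*L) := by positivity
  have hKL : 1 ≤ 2*K*L := Nat.mul_pos (Nat.mul_pos (by norm_num) hK) hL
  have hsupp : 2*(A/(2*L))*((2*K*L : ℕ):ℝ) = 2*A*K := by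
    push_cast; field_simp
  rcases le_or_gt (|t|) (2*A*K) with ht | ht
  · have habs := abs_le.mp ht
    rw [triWave_eval K hK A B t hA (by linarith [habs.1]) habs.2]
    have hh0 := hfn_nonneg (t/A)
    have hh1 := hfn_le_one (t/A)
    have hv0 : (0:ℝ) ≤ B * A * hfn (t/A) := by positivity
    have hv1 : B * A * hfn (t/A) ≤ 2*(A*B/(2*L))*((L:ℕ):ℝ) := by
      have h : 2*(A*B/(2*L))*((L:ℕ):ℝ) = A*B := by field_simp
      rw [h]
      nlinarith [mul_le_mul_of_nonneg_left hh1 (mul_nonneg hB.le hA.le)]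
    rw [triWave_eval L hL _ γ _ hα' (by linarith) hv1]
    have hdiv : B * A * hfn (t/A) / (A*B/(2*L)) = ((2*L : ℤ):ℝ) * hfn (t/A) := by
      push_cast; field_simp
    rw [hdiv, hfn_comp]
    rw [triWave_eval (2*K*L) hKL (A/(2*L)) (γ*B) t hA'
      (by rw [hsupp]; linarith [habs.1]) (by rw [hsupp]; exact habs.2)]
    have harg : ((2*L : ℤ):ℝ) * (t/A) = t / (A/(2*L)) := by
      push_cast; field_simp
    rw [harg]
    ring
  · rw [triWave_zero K A B t hA ht]
    rw [triWave_zero (2*K*L) (A/(2*L)) (γ*B) t hA' (by rw [hsupp]; exact ht)]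
    rw [triWave_eval L hL _ γ 0 hα' (neg_nonpos.mpr (by positivity)) (by positivity)]
    rw [zero_div, hfn_zero, mul_zero]

/-- **Iterated composition of triangle waveforms.** With `α_i = α₁ (γ/(2l))^{i-1}` and
`f_i(t) = T_l(t; α_i, γ)`, for every `m ≥ 1` and every `t ∈ ℝ` we have
`f_m ∘ ⋯ ∘ f_1(t) = T_{2^{m-1} l^m}(t; α_m / γ^{m-1}, γ^m)`. -/
theorem iterComp_triWave (l : ℕ) (hl : 1 ≤ l) (γ α₁ : ℝ) (hγ : 0 < γ) (hα₁ : 0 < α₁)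
    (αf : ℕ → ℝ) (hαf : ∀ i : ℕ, 1 ≤ i → αf i = α₁ * (γ / (2 * l)) ^ (i - 1))
    (f : ℕ → ℝ → ℝ) (hf : ∀ i t, f i t = triWave l (αf i) γ t)
    (m : ℕ) (hm : 1 ≤ m) (t : ℝ) :
    iterComp f m t = triWave (2 ^ (m - 1) * l ^ m) (αf m / γ ^ (m - 1)) (γ ^ m) t := by
  have hlR : (1:ℝ) ≤ (l:ℝ) := by exact_mod_cast hl
  have hαpos : ∀ i : ℕ, 1 ≤ i → 0 < αf i := by
    intro i hi
    rw [hαf i hi]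
    positivity
  induction m, hm using Nat.le_induction with
  | base =>
    show f 1 (iterComp f 0 t) = _
    rw [show iterComp f 0 t = t from rfl, hf]
    norm_num
  | succ m hm IH =>
    show f (m + 1) (iterComp f m t) = _
    rw [IH, hf]
    have hK : 1 ≤ 2 ^ (m-1) * l ^ m := Nat.mul_pos (Nat.pow_pos (by norm_num)) (Nat.pow_pos hl)
    have hA : 0 < αf m / γ ^ (m-1) := by
      have := hαpos m hm; positivity
    have hB : (0:ℝ) < γ ^ m := by positivity
    obtain ⟨n, rfl⟩ : ∃ n, m = n + 1 := ⟨m - 1, by omega⟩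
    have hsimp : n + 1 - 1 = n := rfl
    rw [hsimp] at hA hK ⊢
    have e1 : αf (n + 1 + 1) = (αf (n+1) / γ ^ n) * γ ^ (n+1) / (2 * l) := by
      rw [hαf (n+1+1) (by omega), hαf (n+1) (by omega)]
      have h2 : n + 1 + 1 - 1 = n + 1 := rfl
      have h3 : n + 1 - 1 = n := rfl
      rw [h2, h3, pow_succ, pow_succ]
      have hγn : (γ:ℝ)^n ≠ 0 := by positivity
      field_simp
    rw [e1, triWave_comp _ l hK hl _ _ γ hA hB hγ t]
    have c1 : 2 * (2 ^ n * l ^ (n+1)) * l = 2 ^ (n + 1 + 1 - 1) * l ^ (n+1+1) := by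
      rw [show n + 1 + 1 - 1 = n + 1 from rfl]; ring
    have c2 : αf (n+1) / γ ^ n / (2 * l) = αf (n+1) / γ^n * γ^(n+1) / (2*l) / γ ^ (n+1+1-1) := by
      rw [show n + 1 + 1 - 1 = n + 1 from rfl]
      have hγn : (γ:ℝ)^(n+1) ≠ 0 := by positivity
      field_simp
    rw [c1, ← c2]
    have c3 : γ * γ ^ (n+1) = γ ^ (n+1+1) := (pow_succ' γ (n+1)).symm
    rw [c3]
end
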